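/- Let f(X) be a polynomial with integer coefficients. Then f(X) is a one-stroke polynomial over a ring of modulo 2^w if and only if f(X) is a permutation polynomial over the ring and f(0) ≡ 1 (mod 2), f^2(0) ≡ 2 (mod 4), and f^4(0) ≡ 4 (mod 8). -/

import Mathlib

open Polynomial

/-- `f` is a permutation polynomial over a ring of modulo `2^w`:
for every `w ≥ 0`, the induced map on `ℤ/2^wℤ` is a bijection. -/
def IsPermPoly (f : Polynomial ℤ) : Prop :=
  ∀ w : ℕ, Function.Bijective (fun x : ZMod (2 ^ w) => f.eval₂ (Int.castRingHom (ZMod (2 ^ w))) x)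

/-- `f` is a one-stroke polynomial over a ring of modulo `2^w`:
it is a permutation polynomial and, for every `w ≥ 1` and every point of `ℤ/2^wℤ`,
the orbit `{f^i(X̄) : 0 ≤ i < 2^w}` is all of `ℤ/2^wℤ`. -/
def IsOneStroke (f : Polynomial ℤ) : Prop :=
  IsPermPoly f ∧ ∀ w : ℕ, 1 ≤ w → ∀ x : ℤ, ∀ y : ZMod (2 ^ w),
    ∃ i < 2 ^ w, (((fun t => f.eval t)^[i] x : ℤ) : ZMod (2 ^ w)) = y

open Function Finset

namespace OSAux

/-- basic congruence of polynomial evaluation -/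
lemma evalCongr (p : Polynomial ℤ) {n x y : ℤ} (h : x ≡ y [ZMOD n]) :
    p.eval x ≡ p.eval y [ZMOD n] := by
  have := Polynomial.sub_dvd_eval_sub x y p
  exact (Int.modEq_iff_dvd.2 ((Int.modEq_iff_dvd.1 h.symm).trans this)).symm

/-- first-order expansion -/
lemma eval_shift (p : Polynomial ℤ) (x t : ℤ) :
    p.eval (x + t) ≡ p.eval x + p.derivative.eval x * t [ZMOD t ^ 2] := by
  have h1 : p.eval (x + t) = (taylor x p).eval t := by
    rw [taylor_eval, add_comm]
  rw [h1]
  set q := taylor x p with hq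
  have h2 : q.eval t = ∑ i ∈ Finset.range (q.natDegree + 2), q.coeff i * t ^ i :=
    eval_eq_sum_range' (by omega) t
  have key : ∀ n, 2 ≤ n → (∑ i ∈ Finset.range n, q.coeff i * t ^ i) ≡
      q.coeff 0 + q.coeff 1 * t [ZMOD t ^ 2] := by
    intro n hn
    induction n with
    | zero => omega
    | succ m ih =>
      rcases Nat.lt_or_ge m 2 with hm | hm
      · interval_cases m
        · omega
        · simp [Finset.sum_range_succ, pow_one]
      · rw [Finset.sum_range_succ]
        have : (t:ℤ) ^ 2 ∣ q.coeff m * t ^ m :=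
          Dvd.dvd.mul_left (pow_dvd_pow t hm) _
        calc (∑ i ∈ Finset.range m, q.coeff i * t ^ i) + q.coeff m * t ^ m
            ≡ (q.coeff 0 + q.coeff 1 * t) + q.coeff m * t ^ m [ZMOD t ^ 2] :=
              Int.ModEq.add_right _ (ih hm)
          _ ≡ (q.coeff 0 + q.coeff 1 * t) + 0 [ZMOD t ^ 2] :=
              Int.ModEq.add_left _ ((Int.modEq_zero_iff_dvd).2 this)
          _ = q.coeff 0 + q.coeff 1 * t := by ring
  rw [h2]
  have h3 := key (q.natDegree + 2) (by omega)
  have c0 : q.coeff 0 = p.eval x := by rw [hq, taylor_coeff_zero]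
  have c1 : q.coeff 1 = p.derivative.eval x := by rw [hq, taylor_coeff_one]
  rwa [c0, c1] at h3


lemma deriv2_even (f : Polynomial ℤ) (x : ℤ) :
    2 ∣ (derivative (derivative f)).eval x := by
  have h := congrFun (Polynomial.factorial_smul_hasseDeriv (R := ℤ) 2) f
  simp only [LinearMap.smul_apply] at h
  have h2 : derivative (derivative f) = (Nat.factorial 2) • (hasseDeriv 2 f) := by
    rw [h, Function.iterate_succ_apply', Function.iterate_one]
  refine ⟨(hasseDeriv 2 f).eval x, ?_⟩
  rw [h2]
  have : (Nat.factorial 2) • (hasseDeriv 2 f) = (2 : ℤ) * (hasseDeriv 2 f) := by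
    simp [Nat.factorial]
  rw [this]
  simp [Polynomial.eval_mul]

lemma modCast {w : ℕ} {a b : ℤ} :
    (a : ZMod (2^w)) = (b : ZMod (2^w)) ↔ a ≡ b [ZMOD (2:ℤ)^w] := by
  have e : (((2:ℕ)^w : ℕ) : ℤ) = (2:ℤ)^w := by push_cast; ring
  rw [ZMod.intCast_eq_intCast_iff, e]

/-- the induced map on ZMod N -/
def sig (f : Polynomial ℤ) (N : ℕ) : ZMod N → ZMod N :=
  fun z => f.eval₂ (Int.castRingHom (ZMod N)) z

lemma cast_eval (f : Polynomial ℤ) (N : ℕ) (x : ℤ) :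
    ((f.eval x : ℤ) : ZMod N) = sig f N (x : ZMod N) := by
  rw [sig]
  rw [show ((x : ℤ) : ZMod N) = (Int.castRingHom (ZMod N)) x from rfl,
    Polynomial.eval₂_at_apply]
  rfl

lemma cast_iter (f : Polynomial ℤ) (N : ℕ) (i : ℕ) (x : ℤ) :
    (((fun t => f.eval t)^[i] x : ℤ) : ZMod N) = (sig f N)^[i] (x : ZMod N) := by
  induction i with
  | zero => simp
  | succ m ih =>
    rw [Function.iterate_succ_apply', Function.iterate_succ_apply']
    show ((f.eval ((fun t => f.eval t)^[m] x) : ℤ) : ZMod N) = _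
    rw [cast_eval, ih]

lemma deriv_parity (f : Polynomial ℤ) {x y : ℤ} (h : x ≡ y [ZMOD 2]) :
    f.derivative.eval x ≡ f.derivative.eval y [ZMOD 4] := by
  obtain ⟨m, hm⟩ := Int.modEq_iff_dvd.1 h
  have hy : y = x + 2 * m := by omega
  have h1 := (eval_shift f.derivative x (2 * m)).of_dvd
    (show (4:ℤ) ∣ (2*m)^2 from ⟨m^2, by ring⟩)
  obtain ⟨c, hc⟩ := deriv2_even f x
  have h3 : f.derivative.eval x + (derivative (derivative f)).eval x * (2*m)
      ≡ f.derivative.eval x [ZMOD 4] := by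
    have hd : (4:ℤ) ∣ (derivative (derivative f)).eval x * (2*m) := ⟨c*m, by rw [hc]; ring⟩
    simpa using (Int.ModEq.add_left (f.derivative.eval x) ((Int.modEq_zero_iff_dvd).2 hd))
  rw [← hy] at h1
  exact (h1.trans h3).symm

/-- the half-derivative -/
noncomputable def U (f : Polynomial ℤ) (x : ℤ) : ℤ := (f.derivative.eval x - 1) / 2

section Perm
variable {f : Polynomial ℤ}

lemma injCast (hP : IsPermPoly f) (w : ℕ) {a b : ℤ}
    (h : f.eval a ≡ f.eval b [ZMOD (2:ℤ)^w]) : a ≡ b [ZMOD (2:ℤ)^w] := by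
  have h2 : sig f (2^w) ((a : ℤ) : ZMod (2^w)) = sig f (2^w) ((b : ℤ) : ZMod (2^w)) := by
    rw [← cast_eval, ← cast_eval]; exact modCast.2 h
  exact modCast.1 ((hP w).injective h2)

lemma deriv_odd (hP : IsPermPoly f) (x : ℤ) : ¬ (2:ℤ) ∣ f.derivative.eval x := by
  rintro ⟨u, hu⟩
  have h1 := eval_shift f x 2
  have h2 : f.eval (x + 2) ≡ f.eval x [ZMOD (2:ℤ)^2] := by
    have e : f.eval x + f.derivative.eval x * 2 = f.eval x + 4 * u := by rw [hu]; ring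
    rw [e] at h1
    have : f.eval x + 4 * u ≡ f.eval x [ZMOD (2:ℤ)^2] := by
      have : ((2:ℤ)^2) ∣ 4 * u := ⟨u, by ring⟩
      simpa using (Int.ModEq.add_left (f.eval x) ((Int.modEq_zero_iff_dvd).2 this))
    exact (by simpa using h1 : f.eval (x+2) ≡ f.eval x + 4*u [ZMOD (2:ℤ)^2]).trans this
  have h3 := injCast hP 2 h2
  have h4 := Int.modEq_iff_dvd.1 h3
  simp at h4

lemma hU (hP : IsPermPoly f) (x : ℤ) : f.derivative.eval x = 1 + 2 * U f x := by
  have h := deriv_odd hP x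
  have h2 : (2:ℤ) ∣ f.derivative.eval x - 1 := by
    rcases Int.even_or_odd (f.derivative.eval x) with ⟨k, hk⟩ | ⟨k, hk⟩
    · exact absurd ⟨k, by omega⟩ h
    · exact ⟨k, by omega⟩
  obtain ⟨u, hu⟩ := h2
  have : U f x = u := by
    rw [U, hu]
    exact Int.mul_ediv_cancel_left u two_ne_zero
  omega

lemma Upar (hP : IsPermPoly f) {x y : ℤ} (h : x ≡ y [ZMOD 2]) :
    U f x ≡ U f y [ZMOD 2] := by
  have h4 := deriv_parity f h
  rw [hU hP x, hU hP y] at h4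
  obtain ⟨k, hk⟩ := Int.modEq_iff_dvd.1 h4
  exact Int.modEq_iff_dvd.2 ⟨k, by omega⟩

end Perm

lemma iterCongr (f : Polynomial ℤ) {n x y : ℤ} (h : x ≡ y [ZMOD n]) (k : ℕ) :
    (fun t => f.eval t)^[k] x ≡ (fun t => f.eval t)^[k] y [ZMOD n] := by
  induction k with
  | zero => simpa
  | succ m ih =>
    rw [Function.iterate_succ_apply', Function.iterate_succ_apply']
    exact evalCongr f ih

section Perm2
variable {f : Polynomial ℤ}

lemma stepB (hP : IsPermPoly f) (w : ℕ) (hw : 1 ≤ w) (x s : ℤ) :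
    f.eval (x + 2^w * s) ≡ f.eval x + 2^w * s [ZMOD (2:ℤ)^(w+1)] := by
  have hdvd : (2:ℤ)^(w+1) ∣ (2^w * s)^2 := by
    have h1 : (2:ℤ)^(w+1) ∣ (2:ℤ)^(w*2) := pow_dvd_pow 2 (by omega)
    exact h1.trans ⟨s^2, by rw [mul_pow, ← pow_mul]⟩
  have h2 := (eval_shift f x (2^w * s)).of_dvd hdvd
  rw [hU hP x] at h2
  refine h2.trans ?_
  have e : f.eval x + (1 + 2 * U f x) * (2^w * s)
      = (f.eval x + 2^w * s) + (2:ℤ)^(w+1) * (U f x * s) := by ring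
  rw [e]
  exact (Int.ModEq.add_left _ ((Int.modEq_zero_iff_dvd).2 ⟨U f x * s, rfl⟩)).trans
    (by simp)

lemma iterB (hP : IsPermPoly f) (w : ℕ) (hw : 1 ≤ w) (x s : ℤ) (k : ℕ) :
    (fun t => f.eval t)^[k] (x + 2^w * s) ≡ (fun t => f.eval t)^[k] x + 2^w * s
      [ZMOD (2:ℤ)^(w+1)] := by
  induction k with
  | zero => simp
  | succ m ih =>
    rw [Function.iterate_succ_apply', Function.iterate_succ_apply']
    calc f.eval ((fun t => f.eval t)^[m] (x + 2^w * s))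
        ≡ f.eval ((fun t => f.eval t)^[m] x + 2^w * s) [ZMOD (2:ℤ)^(w+1)] := evalCongr f ih
      _ ≡ f.eval ((fun t => f.eval t)^[m] x) + 2^w * s [ZMOD (2:ℤ)^(w+1)] :=
          stepB hP w hw _ s

lemma stepC (hP : IsPermPoly f) (n : ℕ) (hn : 2 ≤ n) (x : ℤ) :
    f.eval (x + 2^n) ≡ f.eval x + 2^n + 2^(n+1) * U f x [ZMOD (2:ℤ)^(n+2)] := by
  have hdvd : (2:ℤ)^(n+2) ∣ ((2:ℤ)^n)^2 := by
    rw [← pow_mul]; exact pow_dvd_pow 2 (by omega)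
  have h2 := (eval_shift f x (2^n)).of_dvd hdvd
  rw [hU hP x] at h2
  refine h2.trans ?_
  have e : f.eval x + (1 + 2 * U f x) * 2^n = f.eval x + 2^n + 2^(n+1) * U f x := by ring
  rw [e]

lemma iterD (hP : IsPermPoly f) (n : ℕ) (hn : 2 ≤ n) (x : ℤ) (k : ℕ) :
    (fun t => f.eval t)^[k] (x + 2^n) ≡ (fun t => f.eval t)^[k] x + 2^n
      + 2^(n+1) * (∑ i ∈ Finset.range k, U f ((fun t => f.eval t)^[i] x))
      [ZMOD (2:ℤ)^(n+2)] := by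
  induction k with
  | zero => simp
  | succ m ih =>
    rw [Function.iterate_succ_apply', Function.iterate_succ_apply']
    calc f.eval ((fun t => f.eval t)^[m] (x + 2^n))
        ≡ f.eval (((fun t => f.eval t)^[m] x + 2^n)
            + 2^(n+1) * (∑ i ∈ Finset.range m, U f ((fun t => f.eval t)^[i] x)))
            [ZMOD (2:ℤ)^(n+2)] := by
          refine evalCongr f ?_
          refine ih.trans ?_
          rw [add_assoc]
      _ ≡ f.eval ((fun t => f.eval t)^[m] x + 2^n)
            + 2^(n+1) * (∑ i ∈ Finset.range m, U f ((fun t => f.eval t)^[i] x))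
            [ZMOD (2:ℤ)^(n+2)] :=
          stepB hP (n+1) (by omega) _ _
      _ ≡ (f.eval ((fun t => f.eval t)^[m] x) + 2^n
            + 2^(n+1) * U f ((fun t => f.eval t)^[m] x))
            + 2^(n+1) * (∑ i ∈ Finset.range m, U f ((fun t => f.eval t)^[i] x))
            [ZMOD (2:ℤ)^(n+2)] :=
          Int.ModEq.add_right _ (stepC hP n hn _)
      _ = f.eval ((fun t => f.eval t)^[m] x) + 2^n
            + 2^(n+1) * (∑ i ∈ Finset.range (m+1), U f ((fun t => f.eval t)^[i] x)) := by
          rw [Finset.sum_range_succ]; ring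

lemma par1 (hP : IsPermPoly f) (h1 : f.eval 0 ≡ 1 [ZMOD 2]) (x : ℤ) :
    f.eval x ≡ x + 1 [ZMOD 2] := by
  have hf1 : f.eval 1 ≡ 0 [ZMOD 2] := by
    rcases Int.even_or_odd (f.eval 1) with ⟨k, hk⟩ | ⟨k, hk⟩
    · exact Int.modEq_iff_dvd.2 ⟨-k, by omega⟩
    · exfalso
      have e1 : f.eval 1 ≡ f.eval 0 [ZMOD (2:ℤ)^1] := by
        have : f.eval 1 ≡ 1 [ZMOD 2] := Int.modEq_iff_dvd.2 ⟨-k, by omega⟩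
        simpa using this.trans h1.symm
      have := injCast hP 1 e1
      have h2 := Int.modEq_iff_dvd.1 this
      simp at h2
  rcases Int.even_or_odd x with ⟨m, hm⟩ | ⟨m, hm⟩
  · have hx0 : x ≡ 0 [ZMOD 2] := Int.modEq_iff_dvd.2 ⟨-m, by omega⟩
    calc f.eval x ≡ f.eval 0 [ZMOD 2] := evalCongr f hx0
      _ ≡ 1 [ZMOD 2] := h1
      _ ≡ x + 1 [ZMOD 2] := (Int.ModEq.add_right 1 hx0).symm
  · have hx1 : x ≡ 1 [ZMOD 2] := Int.modEq_iff_dvd.2 ⟨-m, by omega⟩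
    calc f.eval x ≡ f.eval 1 [ZMOD 2] := evalCongr f hx1
      _ ≡ 0 [ZMOD 2] := hf1
      _ ≡ x + 1 [ZMOD 2] := by
          refine Int.modEq_iff_dvd.2 ⟨m + 1, by omega⟩

lemma parIter (hP : IsPermPoly f) (h1 : f.eval 0 ≡ 1 [ZMOD 2]) (i : ℕ) :
    (fun t => f.eval t)^[i] 0 ≡ (i : ℤ) [ZMOD 2] := by
  induction i with
  | zero => simp
  | succ m ih =>
    rw [Function.iterate_succ_apply']
    calc f.eval ((fun t => f.eval t)^[m] 0)
        ≡ (fun t => f.eval t)^[m] 0 + 1 [ZMOD 2] := par1 hP h1 _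
      _ ≡ (m : ℤ) + 1 [ZMOD 2] := Int.ModEq.add_right 1 ih
      _ = ((m+1 : ℕ) : ℤ) := by push_cast; ring

lemma sumHelper (hP : IsPermPoly f) (h1 : f.eval 0 ≡ 1 [ZMOD 2]) (c : ℕ) :
    (∑ i ∈ Finset.range (2*c), U f ((fun t => f.eval t)^[i] 0))
      ≡ (c : ℤ) * (U f 0 + U f 1) [ZMOD 2] := by
  induction c with
  | zero => simp
  | succ m ih =>
    have e : 2*(m+1) = (2*m) + 1 + 1 := by ring
    rw [e, Finset.sum_range_succ, Finset.sum_range_succ]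
    have hA : U f ((fun t => f.eval t)^[2*m] 0) ≡ U f 0 [ZMOD 2] := by
      refine Upar hP ((parIter hP h1 (2*m)).trans ?_)
      exact Int.modEq_iff_dvd.2 ⟨-m, by push_cast; ring⟩
    have hB : U f ((fun t => f.eval t)^[2*m+1] 0) ≡ U f 1 [ZMOD 2] := by
      refine Upar hP ((parIter hP h1 (2*m+1)).trans ?_)
      exact Int.modEq_iff_dvd.2 ⟨-m, by push_cast; ring⟩
    calc (∑ i ∈ Finset.range (2*m), U f ((fun t => f.eval t)^[i] 0))
          + U f ((fun t => f.eval t)^[2*m] 0) + U f ((fun t => f.eval t)^[2*m+1] 0)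
        ≡ (m:ℤ) * (U f 0 + U f 1) + U f 0 + U f 1 [ZMOD 2] := (ih.add hA).add hB
      _ = ((m+1:ℕ) : ℤ) * (U f 0 + U f 1) := by push_cast; ring

lemma Geven (hP : IsPermPoly f) (h1 : f.eval 0 ≡ 1 [ZMOD 2]) (n : ℕ) (hn : 2 ≤ n) :
    (∑ i ∈ Finset.range (2^n), U f ((fun t => f.eval t)^[i] 0)) ≡ 0 [ZMOD 2] := by
  obtain ⟨m, rfl⟩ : ∃ m, n = m + 2 := ⟨n - 2, by omega⟩
  have h := sumHelper hP h1 (2^(m+1))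
  have e : 2 * 2^(m+1) = 2^(m+2) := by ring
  rw [e] at h
  refine h.trans ?_
  refine (Int.modEq_zero_iff_dvd).2 ⟨2^m * (U f 0 + U f 1), ?_⟩
  push_cast
  ring

end Perm2

/-- the key invariant -/
def Inv (f : Polynomial ℤ) (n : ℕ) : Prop :=
  ∀ x : ℤ, (fun t => f.eval t)^[2^n] x ≡ x + 2^n [ZMOD (2:ℤ)^(n+1)]

section Trans
variable {f : Polynomial ℤ}

lemma trans_of_inv (hP : IsPermPoly f) {n : ℕ} (hI : Inv f n) (x : ℤ)
    (y : ZMod (2^(n+1))) :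
    ∃ i < 2^(n+1), (((fun t => f.eval t)^[i] x : ℤ) : ZMod (2^(n+1))) = y := by
  haveI : NeZero ((2:ℕ)^(n+1)) := ⟨by positivity⟩
  set g := sig f (2^(n+1)) with hg
  have hgb : Function.Bijective g := hP (n+1)
  have hInv : ∀ z : ZMod (2^(n+1)), g^[2^n] z = z + ((2^n : ℕ) : ZMod (2^(n+1))) := by
    intro z
    obtain ⟨a, rfl⟩ := ZMod.intCast_surjective (n := 2^(n+1)) z
    rw [← cast_iter]
    have h2 : (((fun t => f.eval t)^[2^n] a : ℤ) : ZMod (2^(n+1)))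
        = ((a + 2^n : ℤ) : ZMod (2^(n+1))) := modCast.2 (hI a)
    rw [h2]
    push_cast
    ring
  have hNid : ∀ z : ZMod (2^(n+1)), g^[2^(n+1)] z = z := by
    intro z
    have e' : g^[2^(n+1)] = g^[2^n + 2^n] :=
      congrArg (fun k => g^[k]) (by ring : (2:ℕ)^(n+1) = 2^n + 2^n)
    rw [e', Function.iterate_add_apply, hInv, hInv, add_assoc]
    have e2 : ((2^n : ℕ) : ZMod (2^(n+1))) + ((2^n : ℕ) : ZMod (2^(n+1)))
        = (((2:ℕ)^(n+1) : ℕ) : ZMod (2^(n+1))) := by push_cast; ring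
    rw [e2, ZMod.natCast_self, add_zero]
  have hne : ((2^n : ℕ) : ZMod (2^(n+1))) ≠ 0 := by
    rw [Ne, ZMod.natCast_eq_zero_iff]
    intro hdvd
    have := Nat.le_of_dvd (by positivity) hdvd
    have h2 : (2:ℕ)^n < 2^(n+1) := Nat.pow_lt_pow_right (by norm_num) (by omega)
    omega
  have key : ∀ d, 0 < d → d < 2^(n+1) → ∀ z : ZMod (2^(n+1)), g^[d] z ≠ z := by
    intro d hd0 hdN z hz
    have hp1 : Function.IsPeriodicPt g d z := hz
    have hp2 : Function.IsPeriodicPt g (2^(n+1)) z := hNid z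
    have hp3 := hp1.gcd hp2
    obtain ⟨m, hm, hme⟩ := (Nat.dvd_prime_pow Nat.prime_two).1 (Nat.gcd_dvd_right d (2^(n+1)))
    have hlt : Nat.gcd d (2^(n+1)) < 2^(n+1) :=
      lt_of_le_of_lt (Nat.le_of_dvd hd0 (Nat.gcd_dvd_left d (2^(n+1)))) hdN
    have hm' : m ≤ n := by
      by_contra hc
      have : m = n + 1 := by omega
      rw [this] at hme
      rw [hme] at hlt
      exact lt_irrefl _ hlt
    obtain ⟨k, hk⟩ : Nat.gcd d (2^(n+1)) ∣ 2^n := hme ▸ pow_dvd_pow 2 hm'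
    have hp4 : Function.IsPeriodicPt g (2^n) z := hk ▸ hp3.mul_const k
    have h5 : g^[2^n] z = z := hp4
    rw [hInv z] at h5
    exact hne (by simpa using h5)
  have hinj : Function.Injective
      (fun i : Fin (2^(n+1)) => g^[(i : ℕ)] ((x : ℤ) : ZMod (2^(n+1)))) := by
    have main : ∀ i j : Fin (2^(n+1)), (i:ℕ) < (j:ℕ) →
        g^[(i:ℕ)] ((x:ℤ) : ZMod (2^(n+1))) ≠ g^[(j:ℕ)] ((x:ℤ) : ZMod (2^(n+1))) := by
      intro i j hij heq
      have e : (j:ℕ) = ((j:ℕ) - (i:ℕ)) + (i:ℕ) := by omega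
      rw [e, Function.iterate_add_apply] at heq
      have hj := j.2
      exact key ((j:ℕ) - (i:ℕ)) (by omega) (by omega) _ heq.symm
    intro i j hij
    rcases lt_trichotomy (i:ℕ) (j:ℕ) with h | h | h
    · exact absurd hij (main i j h)
    · exact Fin.ext h
    · exact absurd hij.symm (main j i h)
  have hbij : Function.Bijective
      (fun i : Fin (2^(n+1)) => g^[(i : ℕ)] ((x : ℤ) : ZMod (2^(n+1)))) :=
    (Fintype.bijective_iff_injective_and_card _).2 ⟨hinj, by simp [ZMod.card]⟩
  obtain ⟨i, hi⟩ := hbij.surjective y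
  exact ⟨(i : ℕ), i.2, by rw [cast_iter]; exact hi⟩

end Trans

section Main
variable {f : Polynomial ℤ}

lemma inv_all (hP : IsPermPoly f) (h1 : f.eval 0 ≡ 1 [ZMOD 2])
    (h2 : (fun t => f.eval t)^[2] 0 ≡ 2 [ZMOD 4])
    (h4 : (fun t => f.eval t)^[4] 0 ≡ 4 [ZMOD 8]) : ∀ n, Inv f n := by
  intro n
  induction n with
  | zero =>
    intro x
    simpa using par1 hP h1 x
  | succ n ih =>
    -- the value statement
    have val : (fun t => f.eval t)^[2^(n+1)] 0 ≡ 2^(n+1) [ZMOD (2:ℤ)^(n+2)] := by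
      rcases n with _ | _ | m
      · show (fun t => f.eval t)^[2^1] 0 ≡ 2^1 [ZMOD (2:ℤ)^2]
        rw [show (2:ℕ)^1 = 2 by norm_num, show ((2:ℤ)^1 : ℤ) = 2 by norm_num,
          show ((2:ℤ)^2 : ℤ) = 4 by norm_num]
        exact h2
      · show (fun t => f.eval t)^[2^2] 0 ≡ 2^2 [ZMOD (2:ℤ)^3]
        rw [show (2:ℕ)^2 = 4 by norm_num, show ((2:ℤ)^2 : ℤ) = 4 by norm_num,
          show ((2:ℤ)^3 : ℤ) = 8 by norm_num]
        exact h4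
      · show (fun t => f.eval t)^[2^(m+3)] 0 ≡ 2^(m+3) [ZMOD (2:ℤ)^(m+4)]
        have hn2 : 2 ≤ m + 2 := by omega
        have ih0 := ih 0
        obtain ⟨k, hk⟩ := Int.modEq_iff_dvd.1 ih0
        have ha : (fun t => f.eval t)^[2^(m+2)] 0 = 2^(m+2) + 2^(m+3) * (-k) := by
          show (fun t => f.eval t)^[2^(m+2)] 0 = 2^(m+2) + 2^(m+3) * (-k)
          have : ((0:ℤ) + 2^(m+2)) - (fun t => f.eval t)^[2^(m+2)] 0 = (2:ℤ)^(m+2+1) * k := hk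
          linear_combination -this
        have hSum := Geven hP h1 (m+2) hn2
        obtain ⟨S, hS⟩ := Int.modEq_iff_dvd.1 hSum
        -- hS : 0 - Σ = 2 * S
        calc (fun t => f.eval t)^[2^(m+3)] 0
            = (fun t => f.eval t)^[2^(m+2)] ((fun t => f.eval t)^[2^(m+2)] 0) := by
              rw [← Function.iterate_add_apply]
              congr 1
              ring
          _ = (fun t => f.eval t)^[2^(m+2)] ((0 + 2^(m+2)) + 2^(m+3) * (-k)) := by
              rw [ha]; ring_nf
          _ ≡ (fun t => f.eval t)^[2^(m+2)] (0 + 2^(m+2)) + 2^(m+3) * (-k)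
              [ZMOD (2:ℤ)^(m+4)] := by
              have := iterB hP (m+3) (by omega) ((0:ℤ) + 2^(m+2)) (-k) (2^(m+2))
              exact this
          _ ≡ ((fun t => f.eval t)^[2^(m+2)] 0 + 2^(m+2)
                + 2^(m+3) * (∑ i ∈ Finset.range (2^(m+2)),
                    U f ((fun t => f.eval t)^[i] 0))) + 2^(m+3) * (-k)
              [ZMOD (2:ℤ)^(m+4)] := by
              refine Int.ModEq.add_right _ ?_
              have := iterD hP (m+2) hn2 0 (2^(m+2))
              exact this
          _ = 2^(m+3) + (2:ℤ)^(m+4) * (-k) + 2^(m+3)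
                * (∑ i ∈ Finset.range (2^(m+2)), U f ((fun t => f.eval t)^[i] 0)) := by
              rw [ha]; ring
          _ ≡ 2^(m+3) [ZMOD (2:ℤ)^(m+4)] := by
              have hd : (2:ℤ)^(m+4) ∣ (2:ℤ)^(m+4) * (-k) + 2^(m+3)
                  * (∑ i ∈ Finset.range (2^(m+2)), U f ((fun t => f.eval t)^[i] 0)) := by
                refine dvd_add ⟨-k, rfl⟩ ?_
                refine ⟨-S, ?_⟩
                have e : (∑ i ∈ Finset.range (2^(m+2)), U f ((fun t => f.eval t)^[i] 0))
                    = -(2 * S) := by linarith [hS]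
                rw [e]; ring
              have hz := (Int.modEq_zero_iff_dvd).2 hd
              have step : (2:ℤ)^(m+3) + ((2:ℤ)^(m+4) * (-k) + 2^(m+3)
                    * (∑ i ∈ Finset.range (2^(m+2)), U f ((fun t => f.eval t)^[i] 0)))
                  ≡ 2^(m+3) + 0 [ZMOD (2:ℤ)^(m+4)] := Int.ModEq.add_left _ hz
              have e2 : (2:ℤ)^(m+3) + 2^(m+4) * (-k) + 2^(m+3)
                    * (∑ i ∈ Finset.range (2^(m+2)), U f ((fun t => f.eval t)^[i] 0))
                  = (2:ℤ)^(m+3) + ((2:ℤ)^(m+4) * (-k) + 2^(m+3)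
                    * (∑ i ∈ Finset.range (2^(m+2)), U f ((fun t => f.eval t)^[i] 0))) := by
                ring
              rw [e2]
              simpa using step
    -- lifting
    intro x
    obtain ⟨i, hi, hix⟩ := trans_of_inv hP ih 0 ((x : ℤ) : ZMod (2^(n+1)))
    have hmod : (fun t => f.eval t)^[i] 0 ≡ x [ZMOD (2:ℤ)^(n+1)] := modCast.1 hix
    obtain ⟨s, hs⟩ := Int.modEq_iff_dvd.1 hmod
    have hx : x = (fun t => f.eval t)^[i] 0 + 2^(n+1) * s := by linarith [hs]
    calc (fun t => f.eval t)^[2^(n+1)] x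
        = (fun t => f.eval t)^[2^(n+1)] ((fun t => f.eval t)^[i] 0 + 2^(n+1) * s) := by
          rw [hx]
      _ ≡ (fun t => f.eval t)^[2^(n+1)] ((fun t => f.eval t)^[i] 0) + 2^(n+1) * s
          [ZMOD (2:ℤ)^(n+2)] := iterB hP (n+1) (by omega) _ s _
      _ = (fun t => f.eval t)^[i] ((fun t => f.eval t)^[2^(n+1)] 0) + 2^(n+1) * s := by
          rw [← Function.iterate_add_apply, ← Function.iterate_add_apply, Nat.add_comm]
      _ ≡ (fun t => f.eval t)^[i] (0 + 2^(n+1) * 1) + 2^(n+1) * s [ZMOD (2:ℤ)^(n+2)] := by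
          refine Int.ModEq.add_right _ (iterCongr f ?_ i)
          simpa using val
      _ ≡ ((fun t => f.eval t)^[i] 0 + 2^(n+1) * 1) + 2^(n+1) * s [ZMOD (2:ℤ)^(n+2)] :=
          Int.ModEq.add_right _ (iterB hP (n+1) (by omega) 0 1 i)
      _ = x + 2^(n+1) := by rw [hx]; ring

end Main

section Fwd
variable {f : Polynomial ℤ}

lemma orbit_inj (w : ℕ)
    (hos : ∀ y : ZMod (2^w), ∃ i < 2^w, (((fun t => f.eval t)^[i] 0 : ℤ) : ZMod (2^w)) = y)
    {i j : ℕ} (hi : i < 2^w) (hj : j < 2^w)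
    (hij : (((fun t => f.eval t)^[i] 0 : ℤ) : ZMod (2^w))
        = (((fun t => f.eval t)^[j] 0 : ℤ) : ZMod (2^w))) : i = j := by
  haveI : NeZero ((2:ℕ)^w) := ⟨by positivity⟩
  have hsurj : Function.Surjective
      (fun i : Fin (2^w) => (((fun t => f.eval t)^[(i:ℕ)] 0 : ℤ) : ZMod (2^w))) := by
    intro y
    obtain ⟨i', hi', h⟩ := hos y
    exact ⟨⟨i', hi'⟩, h⟩
  have hbij := (Fintype.bijective_iff_surjective_and_card _).2 ⟨hsurj, by simp [ZMod.card]⟩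
  have := hbij.injective (a₁ := ⟨i, hi⟩) (a₂ := ⟨j, hj⟩) hij
  simpa using congrArg Fin.val this

lemma fwd_h1 (hos : IsOneStroke f) : f.eval 0 ≡ 1 [ZMOD 2] := by
  obtain ⟨i, hi, h⟩ := hos.2 1 (by norm_num) 0 (1 : ZMod (2^1))
  interval_cases i
  · exfalso
    rw [Function.iterate_zero_apply] at h
    rw [show ((0:ℤ) : ZMod (2^1)) = ((0:ℤ) : ZMod (2^1)) from rfl] at h
    have : ((0:ℤ) : ZMod (2^1)) = ((1:ℤ) : ZMod (2^1)) := by simpa using h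
    have := modCast.1 this
    have := Int.modEq_iff_dvd.1 this
    simp at this
  · rw [Function.iterate_one] at h
    have h' : ((f.eval 0 : ℤ) : ZMod (2^1)) = ((1:ℤ) : ZMod (2^1)) := by simpa using h
    simpa using modCast.1 h'

lemma fwd_hE (hos : IsOneStroke f) : f.eval 1 ≡ 0 [ZMOD 2] := by
  obtain ⟨i, hi, h⟩ := hos.2 1 (by norm_num) 1 (0 : ZMod (2^1))
  interval_cases i
  · exfalso
    rw [Function.iterate_zero_apply] at h
    have : ((1:ℤ) : ZMod (2^1)) = ((0:ℤ) : ZMod (2^1)) := by simpa using h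
    have := Int.modEq_iff_dvd.1 (modCast.1 this)
    simp at this
  · rw [Function.iterate_one] at h
    have h' : ((f.eval 1 : ℤ) : ZMod (2^1)) = ((0:ℤ) : ZMod (2^1)) := by simpa using h
    simpa using modCast.1 h'

lemma fwd_h2 (hos : IsOneStroke f) : (fun t => f.eval t)^[2] 0 ≡ 2 [ZMOD 4] := by
  have h1 := fwd_h1 hos
  have hE := fwd_hE hos
  have e : (fun t => f.eval t)^[2] 0 = f.eval (f.eval 0) := by
    rw [show (2:ℕ) = 1 + 1 from rfl, Function.iterate_add_apply,
      Function.iterate_one]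
  have heven : (2:ℤ) ∣ (fun t => f.eval t)^[2] 0 := by
    rw [e]
    have : f.eval (f.eval 0) ≡ f.eval 1 [ZMOD 2] := evalCongr f h1
    have h3 := this.trans hE
    obtain ⟨a, ha⟩ := Int.modEq_iff_dvd.1 h3
    exact ⟨-a, by omega⟩
  have hnot : ¬ ((4:ℤ) ∣ (fun t => f.eval t)^[2] 0) := by
    intro hd
    have hc : (((fun t => f.eval t)^[2] 0 : ℤ) : ZMod (2^2))
        = (((fun t => f.eval t)^[0] 0 : ℤ) : ZMod (2^2)) := by
      have : (((fun t => f.eval t)^[2] 0 : ℤ) : ZMod (2^2)) = 0 := by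
        rw [ZMod.intCast_zmod_eq_zero_iff_dvd]
        push_cast
        exact hd
      simpa using this
    have := orbit_inj 2 (hos.2 2 (by norm_num) 0) (by norm_num) (by norm_num) hc
    norm_num at this
  refine Int.modEq_iff_dvd.2 ?_
  omega

lemma fwd_h4 (hos : IsOneStroke f) : (fun t => f.eval t)^[4] 0 ≡ 4 [ZMOD 8] := by
  have hos2 := hos.2 2 (by norm_num) 0
  have h40 : (((fun t => f.eval t)^[4] 0 : ℤ) : ZMod (2^2)) = 0 := by
    obtain ⟨j, hj, hjx⟩ := hos2 (((fun t => f.eval t)^[4] 0 : ℤ) : ZMod (2^2))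
    rcases Nat.eq_zero_or_pos j with rfl | hj0
    · have := hjx.symm
      simpa using this
    · exfalso
      have hc1 : (sig f (2^2))^[4] ((0:ℤ) : ZMod (2^2))
          = (sig f (2^2))^[j] ((0:ℤ) : ZMod (2^2)) := by
        rw [← cast_iter, ← cast_iter]
        exact hjx.symm
      have e4 : (4:ℕ) = j + (4 - j) := by omega
      rw [e4, Function.iterate_add_apply] at hc1
      have h6 := ((hos.1 2).injective.iterate j) hc1
      have hc2 : (((fun t => f.eval t)^[4 - j] 0 : ℤ) : ZMod (2^2))
          = (((fun t => f.eval t)^[0] 0 : ℤ) : ZMod (2^2)) := by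
        rw [cast_iter, cast_iter]
        simpa using h6
      have := orbit_inj 2 hos2 (by omega) (by norm_num) hc2
      omega
  have hd4 : (4:ℤ) ∣ (fun t => f.eval t)^[4] 0 := by
    have := (ZMod.intCast_zmod_eq_zero_iff_dvd _ (2^2)).1 h40
    push_cast at this
    exact this
  have hnot8 : ¬ ((8:ℤ) ∣ (fun t => f.eval t)^[4] 0) := by
    intro hd
    have hc : (((fun t => f.eval t)^[4] 0 : ℤ) : ZMod (2^3))
        = (((fun t => f.eval t)^[0] 0 : ℤ) : ZMod (2^3)) := by
      have : (((fun t => f.eval t)^[4] 0 : ℤ) : ZMod (2^3)) = 0 := by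
        rw [ZMod.intCast_zmod_eq_zero_iff_dvd]
        push_cast
        exact hd
      simpa using this
    have := orbit_inj 3 (hos.2 3 (by norm_num) 0) (by norm_num) (by norm_num) hc
    norm_num at this
  refine Int.modEq_iff_dvd.2 ?_
  omega

end Fwd
end OSAux


theorem stmt_8 (f : Polynomial ℤ) :
    IsOneStroke f ↔
      (IsPermPoly f ∧
       f.eval 0 ≡ 1 [ZMOD 2] ∧
       (fun t => f.eval t)^[2] 0 ≡ 2 [ZMOD 4] ∧
       (fun t => f.eval t)^[4] 0 ≡ 4 [ZMOD 8]) := by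
  constructor
  · intro hos
    exact ⟨hos.1, OSAux.fwd_h1 hos, OSAux.fwd_h2 hos, OSAux.fwd_h4 hos⟩
  · rintro ⟨hP, h1, h2, h4⟩
    refine ⟨hP, ?_⟩
    intro w hw x y
    obtain ⟨n, rfl⟩ : ∃ n, w = n + 1 := ⟨w - 1, by omega⟩
    exact OSAux.trans_of_inv hP (OSAux.inv_all hP h1 h2 h4 n) x y
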